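/- Let h > 0 and let f : ℝ≥0 → ℝ be continuous, non-negative, with f(0) = 0 and compact support, i.e. there exists K such that f(t) = 0 for all t ≥ K. Then the h-cut f_h := f − Λ_{0,h}(f) is continuous, non-negative, satisfies f_h(0) = 0, and f_h(t) = 0 for all t ≥ K. -/

import Mathlib

open Set
open scoped NNReal ENNReal

/-- Solution data for the two-sided Skorohod reflection problem of `f` on `[0,h]`:
`c0` and `ch` are the compensators at `0` and at `h`,
and `fun t => f t + ch t + c0 t` is the reflected path `Λ_{0,h}(f)`.
The support conditions on the measures `dc⁰` and `d(−cʰ)` are phrased as: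
the compensator is constant on every (closed) interval on which the reflected
path avoids the corresponding boundary. -/
structure SkorohodPair (h : ℝ) (f c0 ch : ℝ≥0 → ℝ) : Prop where
  cont0 : Continuous c0
  conth : Continuous ch
  init0 : c0 0 = 0
  inith : ch 0 = 0
  mem_Icc : ∀ t, f t + ch t + c0 t ∈ Set.Icc (0 : ℝ) h
  mono0 : Monotone c0
  antih : Antitone ch
  flat0 : ∀ a b : ℝ≥0, a ≤ b → (∀ t ∈ Set.Icc a b, f t + ch t + c0 t ≠ 0) → c0 b = c0 a
  flath : ∀ a b : ℝ≥0, a ≤ b → (∀ t ∈ Set.Icc a b, f t + ch t + c0 t ≠ h) → ch b = ch a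

/-- **The `h`-cut maps `C₀⁺(ℝ≥0)` to itself** (Theorem 2, item 1): if `f` is continuous,
non-negative, vanishes at `0` and after time `K`, then the `h`-cut
`f_h = f − Λ_{0,h}(f)` is continuous, non-negative, vanishes at `0` and after time `K`. -/
theorem h_cut_mem_C0 (h : ℝ) (hh : 0 < h) (f : ℝ≥0 → ℝ) (hf : Continuous f)
    (hpos : ∀ t, 0 ≤ f t) (hf0 : f 0 = 0) (K : ℝ≥0) (hK : ∀ t, K ≤ t → f t = 0)
    (c0 ch : ℝ≥0 → ℝ) (hp : SkorohodPair h f c0 ch) :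
    Continuous (fun t => f t - (f t + ch t + c0 t)) ∧
    (∀ t, 0 ≤ f t - (f t + ch t + c0 t)) ∧
    (f 0 - (f 0 + ch 0 + c0 0) = 0) ∧
    (∀ t, K ≤ t → f t - (f t + ch t + c0 t) = 0) := by
  have hΛ0 : ∀ t, 0 ≤ f t + ch t + c0 t := fun t => (hp.mem_Icc t).1
  have key : ∀ t, ch t + c0 t ≤ 0 := by
    intro t0
    by_contra hposg
    push_neg at hposg
    set S : Set ℝ≥0 := {u | u ≤ t0 ∧ ch u + c0 u ≤ 0} with hS
    have hne : S.Nonempty := ⟨0, zero_le, by simp [hp.init0, hp.inith]⟩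
    have hbdd : BddAbove S := ⟨t0, fun u hu => hu.1⟩
    have hclosed : IsClosed S :=
      IsClosed.inter isClosed_Iic (isClosed_le (hp.conth.add hp.cont0) continuous_const)
    set s := sSup S with hsdef
    have hsmem : s ∈ S := hclosed.csSup_mem hne hbdd
    have hst0 : s < t0 :=
      lt_of_le_of_ne hsmem.1 (fun he => absurd (he ▸ hsmem.2) (not_le.mpr hposg))
    have hgt : ∀ u, s < u → u ≤ t0 → 0 < ch u + c0 u := by
      intro u hsu hut
      by_contra hle
      push_neg at hle
      exact absurd (le_csSup hbdd ⟨hut, hle⟩) (not_le.mpr hsu)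
    have hflat : ∀ a, s < a → a ≤ t0 → c0 t0 = c0 a := by
      intro a hsa hat
      apply hp.flat0 a t0 hat
      intro u hu hzero
      have h1 := hgt u (lt_of_lt_of_le hsa hu.1) hu.2
      have h2 := hpos u
      linarith
    have hc0 : c0 t0 = c0 s := by
      have hne' : (nhdsWithin s (Set.Ioc s t0)).NeBot := by
        apply mem_closure_iff_nhdsWithin_neBot.mp
        rw [closure_Ioc (ne_of_lt hst0)]
        exact ⟨le_refl s, le_of_lt hst0⟩
      have h1 : Filter.Tendsto c0 (nhdsWithin s (Set.Ioc s t0)) (nhds (c0 s)) :=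
        (hp.cont0.tendsto s).mono_left nhdsWithin_le_nhds
      have h2 : Filter.Tendsto c0 (nhdsWithin s (Set.Ioc s t0)) (nhds (c0 t0)) := by
        apply Filter.Tendsto.congr' _ tendsto_const_nhds
        filter_upwards [self_mem_nhdsWithin] with u hu
        exact hflat u hu.1 hu.2
      exact tendsto_nhds_unique h2 h1
    have hch := hp.antih (le_of_lt hst0)
    have hgs := hsmem.2
    linarith
  refine ⟨?_, ?_, ?_, ?_⟩
  · exact hf.sub ((hf.add hp.conth).add hp.cont0)
  · intro t; have := key t; linarith
  · simp [hf0, hp.init0, hp.inith]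
  · intro t ht
    have h1 := hΛ0 t
    have h2 := key t
    have h3 := hK t ht
    linarith
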